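/- arXiv:1410.8657 — 2 statements merged into one kernel-verified Lean document; each statement's English description precedes it below -/
import Mathlib

section
/- The matrix Q is positive definite (as a real symmetric matrix); in particular, if x ∈ ℚ⁷ satisfies Σ_{i,k} Q_{ik} x_i x_k = 0 then x = 0, i.e., the quadric x Q xᵀ = 0 has no nonzero rational point. -/
/-- The symmetric matrix Q, viewed over ℝ. -/
def Qr : Matrix (Fin 7) (Fin 7) ℝ :=
  !![7,3,3,1,-3,-3,-5; 3,7,3,3,1,-3,-3; 3,3,7,3,3,1,-3; 1,3,3,7,3,3,1;
     -3,1,3,3,7,3,3; -3,-3,1,3,3,7,3; -5,-3,-3,1,3,3,7]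

/-- The symmetric matrix Q, viewed over ℚ. -/
def Qq : Matrix (Fin 7) (Fin 7) ℚ :=
  !![7,3,3,1,-3,-3,-5; 3,7,3,3,1,-3,-3; 3,3,7,3,3,1,-3; 1,3,3,7,3,3,1;
     -3,1,3,3,7,3,3; -3,-3,1,3,3,7,3; -5,-3,-3,1,3,3,7]

set_option maxHeartbeats 1000000 in
/-- If the quadratic form attached to `Q` vanishes at `(x0,…,x6)` over a linear ordered
field, then all coordinates vanish. -/
lemma Q_aux {F : Type*} [Field F] [LinearOrder F] [IsStrictOrderedRing F] (x0 x1 x2 x3 x4 x5 x6 : F)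
    (h : 7*x0^2 + 7*x1^2 + 7*x2^2 + 7*x3^2 + 7*x4^2 + 7*x5^2 + 7*x6^2
      + 6*x0*x1 + 6*x0*x2 + 2*x0*x3 - 6*x0*x4 - 6*x0*x5 - 10*x0*x6
      + 6*x1*x2 + 6*x1*x3 + 2*x1*x4 - 6*x1*x5 - 6*x1*x6
      + 6*x2*x3 + 6*x2*x4 + 2*x2*x5 - 6*x2*x6
      + 6*x3*x4 + 6*x3*x5 + 2*x3*x6 + 6*x4*x5 + 6*x4*x6 + 6*x5*x6 = 0) :
    x0 = 0 ∧ x1 = 0 ∧ x2 = 0 ∧ x3 = 0 ∧ x4 = 0 ∧ x5 = 0 ∧ x6 = 0 := by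
  have key : (1/7:F)*(7*x0+3*x1+3*x2+x3-3*x4-3*x5-5*x6)^2
      + (1/70:F)*(20*x1+6*x2+9*x3+8*x4-6*x5-3*x6)^2
      + (1/130:F)*(26*x2+9*x3+18*x4+14*x5-3*x6)^2
      + (3/286:F)*(22*x3+5*x4+14*x5+10*x6)^2
      + (1/110:F)*(15*x4-2*x5+8*x6)^2
      + (1/10:F)*(4*x5-x6)^2 + (3/2:F)*(x6)^2 = 0 := by linear_combination h
  have n0 := sq_nonneg (7*x0+3*x1+3*x2+x3-3*x4-3*x5-5*x6)
  have n1 := sq_nonneg (20*x1+6*x2+9*x3+8*x4-6*x5-3*x6)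
  have n2 := sq_nonneg (26*x2+9*x3+18*x4+14*x5-3*x6)
  have n3 := sq_nonneg (22*x3+5*x4+14*x5+10*x6)
  have n4 := sq_nonneg (15*x4-2*x5+8*x6)
  have n5 := sq_nonneg (4*x5-x6)
  have n6 := sq_nonneg x6
  have e0 : (7*x0+3*x1+3*x2+x3-3*x4-3*x5-5*x6) = 0 :=
    pow_eq_zero_iff (two_ne_zero) |>.mp (le_antisymm (by linarith) n0)
  have e1 : (20*x1+6*x2+9*x3+8*x4-6*x5-3*x6) = 0 :=
    pow_eq_zero_iff (two_ne_zero) |>.mp (le_antisymm (by linarith) n1)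
  have e2 : (26*x2+9*x3+18*x4+14*x5-3*x6) = 0 :=
    pow_eq_zero_iff (two_ne_zero) |>.mp (le_antisymm (by linarith) n2)
  have e3 : (22*x3+5*x4+14*x5+10*x6) = 0 :=
    pow_eq_zero_iff (two_ne_zero) |>.mp (le_antisymm (by linarith) n3)
  have e4 : (15*x4-2*x5+8*x6) = 0 :=
    pow_eq_zero_iff (two_ne_zero) |>.mp (le_antisymm (by linarith) n4)
  have e5 : (4*x5-x6) = 0 :=
    pow_eq_zero_iff (two_ne_zero) |>.mp (le_antisymm (by linarith) n5)
  have e6 : x6 = 0 :=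
    pow_eq_zero_iff (two_ne_zero) |>.mp (le_antisymm (by linarith) n6)
  refine ⟨by linarith, by linarith, by linarith, by linarith, by linarith, by linarith, e6⟩

set_option maxHeartbeats 1000000 in
/-- Q is positive definite as a real symmetric matrix; in particular the quadric
`x Q xᵀ = 0` has no nonzero rational point. -/
theorem Q_posDef_and_no_rational_point :
    Qr.PosDef ∧
      ∀ x : Fin 7 → ℚ, (∑ i : Fin 7, ∑ k : Fin 7, Qq i k * x i * x k) = 0 → x = 0 := by
  constructor
  · rw [Matrix.posDef_iff_dotProduct_mulVec]
    constructor
    · ext i j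
      fin_cases i <;> fin_cases j <;> rfl
    · intro x hx
      have key : dotProduct (star x) (Qr.mulVec x) =
          7*(x 0)^2 + 7*(x 1)^2 + 7*(x 2)^2 + 7*(x 3)^2 + 7*(x 4)^2 + 7*(x 5)^2 + 7*(x 6)^2
          + 6*(x 0)*(x 1) + 6*(x 0)*(x 2) + 2*(x 0)*(x 3) - 6*(x 0)*(x 4) - 6*(x 0)*(x 5)
          - 10*(x 0)*(x 6) + 6*(x 1)*(x 2) + 6*(x 1)*(x 3) + 2*(x 1)*(x 4) - 6*(x 1)*(x 5)
          - 6*(x 1)*(x 6) + 6*(x 2)*(x 3) + 6*(x 2)*(x 4) + 2*(x 2)*(x 5) - 6*(x 2)*(x 6)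
          + 6*(x 3)*(x 4) + 6*(x 3)*(x 5) + 2*(x 3)*(x 6) + 6*(x 4)*(x 5) + 6*(x 4)*(x 6)
          + 6*(x 5)*(x 6) := by
        simp only [Matrix.mulVec, dotProduct, Fin.sum_univ_seven, Pi.star_apply,
          star_trivial, show Qr 0 0 = 7 from rfl, show Qr 0 1 = 3 from rfl, show Qr 0 2 = 3 from rfl, show Qr 0 3 = 1 from rfl, show Qr 0 4 = -3 from rfl, show Qr 0 5 = -3 from rfl, show Qr 0 6 = -5 from rfl, show Qr 1 0 = 3 from rfl, show Qr 1 1 = 7 from rfl, show Qr 1 2 = 3 from rfl, show Qr 1 3 = 3 from rfl, show Qr 1 4 = 1 from rfl, show Qr 1 5 = -3 from rfl, show Qr 1 6 = -3 from rfl, show Qr 2 0 = 3 from rfl, show Qr 2 1 = 3 from rfl, show Qr 2 2 = 7 from rfl, show Qr 2 3 = 3 from rfl, show Qr 2 4 = 3 from rfl, show Qr 2 5 = 1 from rfl, show Qr 2 6 = -3 from rfl, show Qr 3 0 = 1 from rfl, show Qr 3 1 = 3 from rfl, show Qr 3 2 = 3 from rfl, show Qr 3 3 = 7 from rfl, show Qr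 3 4 = 3 from rfl, show Qr 3 5 = 3 from rfl, show Qr 3 6 = 1 from rfl, show Qr 4 0 = -3 from rfl, show Qr 4 1 = 1 from rfl, show Qr 4 2 = 3 from rfl, show Qr 4 3 = 3 from rfl, show Qr 4 4 = 7 from rfl, show Qr 4 5 = 3 from rfl, show Qr 4 6 = 3 from rfl, show Qr 5 0 = -3 from rfl, show Qr 5 1 = -3 from rfl, show Qr 5 2 = 1 from rfl, show Qr 5 3 = 3 from rfl, show Qr 5 4 = 3 from rfl, show Qr 5 5 = 7 from rfl, show Qr 5 6 = 3 from rfl, show Qr 6 0 = -5 from rfl, show Qr 6 1 = -3 from rfl, show Qr 6 2 = -3 from rfl, show Qr 6 3 = 1 from rfl, show Qr 6 4 = 3 from rfl, show Qr 6 5 = 3 from rfl, show Qr 6 6 = 7 from rfl]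
        ring
      rw [key]
      have hsos : 7*(x 0)^2 + 7*(x 1)^2 + 7*(x 2)^2 + 7*(x 3)^2 + 7*(x 4)^2 + 7*(x 5)^2
          + 7*(x 6)^2
          + 6*(x 0)*(x 1) + 6*(x 0)*(x 2) + 2*(x 0)*(x 3) - 6*(x 0)*(x 4) - 6*(x 0)*(x 5)
          - 10*(x 0)*(x 6) + 6*(x 1)*(x 2) + 6*(x 1)*(x 3) + 2*(x 1)*(x 4) - 6*(x 1)*(x 5)
          - 6*(x 1)*(x 6) + 6*(x 2)*(x 3) + 6*(x 2)*(x 4) + 2*(x 2)*(x 5) - 6*(x 2)*(x 6)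
          + 6*(x 3)*(x 4) + 6*(x 3)*(x 5) + 2*(x 3)*(x 6) + 6*(x 4)*(x 5) + 6*(x 4)*(x 6)
          + 6*(x 5)*(x 6) =
          (1/7:ℝ)*(7*(x 0)+3*(x 1)+3*(x 2)+(x 3)-3*(x 4)-3*(x 5)-5*(x 6))^2
          + (1/70:ℝ)*(20*(x 1)+6*(x 2)+9*(x 3)+8*(x 4)-6*(x 5)-3*(x 6))^2
          + (1/130:ℝ)*(26*(x 2)+9*(x 3)+18*(x 4)+14*(x 5)-3*(x 6))^2
          + (3/286:ℝ)*(22*(x 3)+5*(x 4)+14*(x 5)+10*(x 6))^2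
          + (1/110:ℝ)*(15*(x 4)-2*(x 5)+8*(x 6))^2
          + (1/10:ℝ)*(4*(x 5)-(x 6))^2 + (3/2:ℝ)*((x 6))^2 := by ring
      have hnn : (0:ℝ) ≤ 7*(x 0)^2 + 7*(x 1)^2 + 7*(x 2)^2 + 7*(x 3)^2 + 7*(x 4)^2 + 7*(x 5)^2
          + 7*(x 6)^2
          + 6*(x 0)*(x 1) + 6*(x 0)*(x 2) + 2*(x 0)*(x 3) - 6*(x 0)*(x 4) - 6*(x 0)*(x 5)
          - 10*(x 0)*(x 6) + 6*(x 1)*(x 2) + 6*(x 1)*(x 3) + 2*(x 1)*(x 4) - 6*(x 1)*(x 5)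
          - 6*(x 1)*(x 6) + 6*(x 2)*(x 3) + 6*(x 2)*(x 4) + 2*(x 2)*(x 5) - 6*(x 2)*(x 6)
          + 6*(x 3)*(x 4) + 6*(x 3)*(x 5) + 2*(x 3)*(x 6) + 6*(x 4)*(x 5) + 6*(x 4)*(x 6)
          + 6*(x 5)*(x 6) := by
        rw [hsos]; positivity
      rcases hnn.lt_or_eq with h | h
      · exact h
      · exfalso
        obtain ⟨h0, h1, h2, h3, h4, h5, h6⟩ :=
          Q_aux (x 0) (x 1) (x 2) (x 3) (x 4) (x 5) (x 6) (by linarith)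
        apply hx
        funext i
        fin_cases i <;> assumption
  · intro x hx
    have h : 7*(x 0)^2 + 7*(x 1)^2 + 7*(x 2)^2 + 7*(x 3)^2 + 7*(x 4)^2 + 7*(x 5)^2 + 7*(x 6)^2
        + 6*(x 0)*(x 1) + 6*(x 0)*(x 2) + 2*(x 0)*(x 3) - 6*(x 0)*(x 4) - 6*(x 0)*(x 5)
        - 10*(x 0)*(x 6) + 6*(x 1)*(x 2) + 6*(x 1)*(x 3) + 2*(x 1)*(x 4) - 6*(x 1)*(x 5)
        - 6*(x 1)*(x 6) + 6*(x 2)*(x 3) + 6*(x 2)*(x 4) + 2*(x 2)*(x 5) - 6*(x 2)*(x 6)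
        + 6*(x 3)*(x 4) + 6*(x 3)*(x 5) + 2*(x 3)*(x 6) + 6*(x 4)*(x 5) + 6*(x 4)*(x 6)
        + 6*(x 5)*(x 6) = 0 := by
      simp only [Fin.sum_univ_seven, show Qq 0 0 = 7 from rfl, show Qq 0 1 = 3 from rfl, show Qq 0 2 = 3 from rfl, show Qq 0 3 = 1 from rfl, show Qq 0 4 = -3 from rfl, show Qq 0 5 = -3 from rfl, show Qq 0 6 = -5 from rfl, show Qq 1 0 = 3 from rfl, show Qq 1 1 = 7 from rfl, show Qq 1 2 = 3 from rfl, show Qq 1 3 = 3 from rfl, show Qq 1 4 = 1 from rfl, show Qq 1 5 = -3 from rfl, show Qq 1 6 = -3 from rfl, show Qq 2 0 = 3 from rfl, show Qq 2 1 = 3 from rfl, show Qq 2 2 = 7 from rfl, show Qq 2 3 = 3 from rfl, show Qq 2 4 = 3 from rfl, show Qq 2 5 = 1 from rfl, show Qq 2 6 = -3 from rfl, show Qq 3 0 = 1 from rfl, show Qq 3 1 = 3 from rfl, show Qq 3 2 = 3 from rfl, show Qq 3 3 = 7 from rfl, show Qq 3 4 = 3 from rfl, show Qq 3 5 = 3 from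 rfl, show Qq 3 6 = 1 from rfl, show Qq 4 0 = -3 from rfl, show Qq 4 1 = 1 from rfl, show Qq 4 2 = 3 from rfl, show Qq 4 3 = 3 from rfl, show Qq 4 4 = 7 from rfl, show Qq 4 5 = 3 from rfl, show Qq 4 6 = 3 from rfl, show Qq 5 0 = -3 from rfl, show Qq 5 1 = -3 from rfl, show Qq 5 2 = 1 from rfl, show Qq 5 3 = 3 from rfl, show Qq 5 4 = 3 from rfl, show Qq 5 5 = 7 from rfl, show Qq 5 6 = 3 from rfl, show Qq 6 0 = -5 from rfl, show Qq 6 1 = -3 from rfl, show Qq 6 2 = -3 from rfl, show Qq 6 3 = 1 from rfl, show Qq 6 4 = 3 from rfl, show Qq 6 5 = 3 from rfl, show Qq 6 6 = 7 from rfl] at hx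
      linear_combination hx
    obtain ⟨h0, h1, h2, h3, h4, h5, h6⟩ :=
      Q_aux (x 0) (x 1) (x 2) (x 3) (x 4) (x 5) (x 6) h
    funext i
    fin_cases i <;> assumption
end

section
/- Every element of order 2 in the subgroup of GL₇(ℚ) generated by A and B has trace equal to −1. -/
noncomputable section

def Amat : Matrix (Fin 7) (Fin 7) ℚ :=
  !![-1,0,0,0,0,0,0; 0,-1,0,0,0,0,0; 0,1,0,0,0,1,0; -1,0,0,0,0,0,1;
     0,0,0,0,1,0,0; 0,1,1,0,0,0,0; -1,0,0,1,0,0,0]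

def Bmat : Matrix (Fin 7) (Fin 7) ℚ :=
  !![0,-1,0,0,0,-1,0; 0,1,1,0,0,0,0; 0,-1,0,0,0,0,0; 1,0,0,0,0,0,0;
     0,0,0,0,0,0,-1; 0,0,0,-1,0,0,1; 0,0,0,0,1,0,1]

def BmatInv : Matrix (Fin 7) (Fin 7) ℚ :=
  !![0,0,0,1,0,0,0; 0,0,-1,0,0,0,0; 0,1,1,0,0,0,0; 0,0,0,0,-1,-1,0;
     0,0,0,0,1,0,1; -1,0,1,0,0,0,0; 0,0,0,0,-1,0,0]

set_option maxHeartbeats 1000000 in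
/-- The matrix A as an element of GL₇(ℚ) (it is an involution). -/
def AU : GL (Fin 7) ℚ :=
  ⟨Amat, Amat,
    by ext i j; fin_cases i <;> fin_cases j <;>
      norm_num [Matrix.mul_apply, Fin.sum_univ_succ, Matrix.one_apply, Fin.ext_iff, Amat],
    by ext i j; fin_cases i <;> fin_cases j <;>
      norm_num [Matrix.mul_apply, Fin.sum_univ_succ, Matrix.one_apply, Fin.ext_iff, Amat]⟩

set_option maxHeartbeats 1000000 in
/-- The matrix B as an element of GL₇(ℚ). -/
def BU : GL (Fin 7) ℚ :=
  ⟨Bmat, BmatInv,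
    by ext i j; fin_cases i <;> fin_cases j <;>
      norm_num [Matrix.mul_apply, Fin.sum_univ_succ, Matrix.one_apply, Fin.ext_iff,
        Bmat, BmatInv],
    by ext i j; fin_cases i <;> fin_cases j <;>
      norm_num [Matrix.mul_apply, Fin.sum_univ_succ, Matrix.one_apply, Fin.ext_iff,
        Bmat, BmatInv]⟩
open Matrix

set_option maxHeartbeats 3200000

lemma fin7_mk_0 (h : 0 < 7) : (⟨0, h⟩ : Fin 7) = 0 := rfl
lemma fin7_mk_1 (h : 1 < 7) : (⟨1, h⟩ : Fin 7) = 1 := rfl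
lemma fin7_mk_2 (h : 2 < 7) : (⟨2, h⟩ : Fin 7) = 2 := rfl
lemma fin7_mk_3 (h : 3 < 7) : (⟨3, h⟩ : Fin 7) = 3 := rfl
lemma fin7_mk_4 (h : 4 < 7) : (⟨4, h⟩ : Fin 7) = 4 := rfl
lemma fin7_mk_5 (h : 5 < 7) : (⟨5, h⟩ : Fin 7) = 5 := rfl
lemma fin7_mk_6 (h : 6 < 7) : (⟨6, h⟩ : Fin 7) = 6 := rfl

@[simp] lemma vec7_0 (a0 a1 a2 a3 a4 a5 a6 : ℚ) : ![a0,a1,a2,a3,a4,a5,a6] (0 : Fin 7) = a0 := rfl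
@[simp] lemma vec7_1 (a0 a1 a2 a3 a4 a5 a6 : ℚ) : ![a0,a1,a2,a3,a4,a5,a6] (1 : Fin 7) = a1 := rfl
@[simp] lemma vec7_2 (a0 a1 a2 a3 a4 a5 a6 : ℚ) : ![a0,a1,a2,a3,a4,a5,a6] (2 : Fin 7) = a2 := rfl
@[simp] lemma vec7_3 (a0 a1 a2 a3 a4 a5 a6 : ℚ) : ![a0,a1,a2,a3,a4,a5,a6] (3 : Fin 7) = a3 := rfl
@[simp] lemma vec7_4 (a0 a1 a2 a3 a4 a5 a6 : ℚ) : ![a0,a1,a2,a3,a4,a5,a6] (4 : Fin 7) = a4 := rfl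
@[simp] lemma vec7_5 (a0 a1 a2 a3 a4 a5 a6 : ℚ) : ![a0,a1,a2,a3,a4,a5,a6] (5 : Fin 7) = a5 := rfl
@[simp] lemma vec7_6 (a0 a1 a2 a3 a4 a5 a6 : ℚ) : ![a0,a1,a2,a3,a4,a5,a6] (6 : Fin 7) = a6 := rfl

universe u
variable {α : Type u}
@[simp] lemma cons_val_five' (a : α) (u : Fin 6 → α) :
    Matrix.vecCons a u 5 = u 4 := rfl
@[simp] lemma cons_val_five'' (a : α) (u : Fin 5 → α) :
    Matrix.vecCons a u 5 = u 4 := rfl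
@[simp] lemma cons_val_six' (a : α) (u : Fin 6 → α) :
    Matrix.vecCons a u 6 = u 5 := rfl

/-- The G₂-invariant cross product preserved by `Amat` and `Bmat`. -/
def cprod (x y : Fin 7 → ℚ) : Fin 7 → ℚ
  | ⟨0, _⟩ => -x 0 * y 1 + x 0 * y 2 - x 0 * y 3 - x 0 * y 4 - x 0 * y 5 - x 0 * y 6 + x 1 * y 0 - 2 * x 1 * y 3 - 2 * x 1 * y 4 - 2 * x 1 * y 5 - x 2 * y 0 - 2 * x 2 * y 5 + 2 * x 2 * y 6 + x 3 * y 0 + 2 * x 3 * y 1 + 2 * x 3 * y 4 + 2 * x 3 * y 5 + x 4 * y 0 + 2 * x 4 * y 1 - 2 * x 4 * y 3 + 2 * x 4 * y 6 + x 5 * y 0 + 2 * x 5 * y 1 + 2 * x 5 * y 2 - 2 * x 5 * y 3 + x 6 * y 0 - 2 * x 6 * y 2 - 2 * x 6 * y 4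
  | ⟨1, _⟩ => x 0 * y 1 + 2 * x 0 * y 6 - x 1 * y 0 - x 1 * y 2 + x 1 * y 3 + x 1 * y 4 + x 1 * y 5 + x 1 * y 6 + x 2 * y 1 + 2 * x 2 * y 4 + 2 * x 2 * y 5 - x 3 * y 1 - 2 * x 3 * y 4 - 2 * x 3 * y 6 - x 4 * y 1 - 2 * x 4 * y 2 + 2 * x 4 * y 3 + 2 * x 4 * y 5 - 2 * x 4 * y 6 - x 5 * y 1 - 2 * x 5 * y 2 - 2 * x 5 * y 4 - 2 * x 6 * y 0 - x 6 * y 1 + 2 * x 6 * y 3 + 2 * x 6 * y 4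
  | ⟨2, _⟩ => -2 * x 0 * y 1 - x 0 * y 2 - 2 * x 0 * y 4 - 2 * x 0 * y 6 + 2 * x 1 * y 0 - x 1 * y 2 - 2 * x 1 * y 4 - 2 * x 1 * y 6 + x 2 * y 0 + x 2 * y 1 - x 2 * y 3 - x 2 * y 4 - x 2 * y 5 + x 2 * y 6 + x 3 * y 2 + 2 * x 3 * y 4 + 2 * x 4 * y 0 + 2 * x 4 * y 1 + x 4 * y 2 - 2 * x 4 * y 3 + x 5 * y 2 - 2 * x 5 * y 6 + 2 * x 6 * y 0 + 2 * x 6 * y 1 - x 6 * y 2 + 2 * x 6 * y 5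
  | ⟨3, _⟩ => -2 * x 0 * y 1 - x 0 * y 3 - 2 * x 0 * y 4 - 2 * x 0 * y 5 + 2 * x 1 * y 0 - 2 * x 1 * y 2 - x 1 * y 3 - 2 * x 1 * y 4 + 2 * x 2 * y 1 - x 2 * y 3 + 2 * x 2 * y 6 + x 3 * y 0 + x 3 * y 1 + x 3 * y 2 + x 3 * y 4 + x 3 * y 5 - x 3 * y 6 + 2 * x 4 * y 0 + 2 * x 4 * y 1 - x 4 * y 3 + 2 * x 4 * y 5 + 2 * x 5 * y 0 - x 5 * y 3 - 2 * x 5 * y 4 - 2 * x 5 * y 6 - 2 * x 6 * y 2 + x 6 * y 3 + 2 * x 6 * y 5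
  | ⟨4, _⟩ => 2 * x 0 * y 1 + 2 * x 0 * y 2 + x 0 * y 4 - 2 * x 1 * y 0 + 2 * x 1 * y 2 + x 1 * y 4 - 2 * x 1 * y 5 + 2 * x 1 * y 6 - 2 * x 2 * y 0 - 2 * x 2 * y 1 + 2 * x 2 * y 3 + x 2 * y 4 - 2 * x 3 * y 2 - x 3 * y 4 - x 4 * y 0 - x 4 * y 1 - x 4 * y 2 + x 4 * y 3 - x 4 * y 5 + x 4 * y 6 + 2 * x 5 * y 1 + x 5 * y 4 + 2 * x 5 * y 6 - 2 * x 6 * y 1 - x 6 * y 4 - 2 * x 6 * y 5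
  | ⟨5, _⟩ => -2 * x 0 * y 1 - 2 * x 0 * y 2 + 2 * x 0 * y 3 + x 0 * y 5 - 2 * x 0 * y 6 + 2 * x 1 * y 0 + x 1 * y 5 - 2 * x 1 * y 6 + 2 * x 2 * y 0 - 2 * x 2 * y 3 - 2 * x 2 * y 4 - x 2 * y 5 - 2 * x 3 * y 0 + 2 * x 3 * y 2 + 2 * x 3 * y 4 - x 3 * y 5 + 2 * x 3 * y 6 + 2 * x 4 * y 2 - 2 * x 4 * y 3 - x 4 * y 5 - x 5 * y 0 - x 5 * y 1 + x 5 * y 2 + x 5 * y 3 + x 5 * y 4 - x 5 * y 6 + 2 * x 6 * y 0 + 2 * x 6 * y 1 - 2 * x 6 * y 3 + x 6 * y 5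
  | ⟨6, _⟩ => -2 * x 0 * y 1 - x 0 * y 6 + 2 * x 1 * y 0 - 2 * x 1 * y 3 - 2 * x 1 * y 4 - x 1 * y 6 - 2 * x 2 * y 3 - 2 * x 2 * y 4 - 2 * x 2 * y 5 + x 2 * y 6 + 2 * x 3 * y 1 + 2 * x 3 * y 2 + 2 * x 3 * y 4 + x 3 * y 6 + 2 * x 4 * y 1 + 2 * x 4 * y 2 - 2 * x 4 * y 3 + x 4 * y 6 + 2 * x 5 * y 2 - x 5 * y 6 + x 6 * y 0 + x 6 * y 1 - x 6 * y 2 - x 6 * y 3 - x 6 * y 4 + x 6 * y 5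

/-- The invariant positive definite bilinear form. -/
def bForm (x y : Fin 7 → ℚ) : ℚ :=
  3 * x 0 * y 0 + x 0 * y 1 - x 0 * y 2 - x 0 * y 3 - x 0 * y 4 + x 0 * y 5 - x 0 * y 6 + x 1 * y 0 + 3 * x 1 * y 1 + x 1 * y 2 - x 1 * y 3 + x 1 * y 4 + x 1 * y 5 + x 1 * y 6 - x 2 * y 0 + x 2 * y 1 + 3 * x 2 * y 2 - x 2 * y 3 + x 2 * y 4 - x 2 * y 5 + x 2 * y 6 - x 3 * y 0 - x 3 * y 1 - x 3 * y 2 + 3 * x 3 * y 3 + x 3 * y 4 + x 3 * y 5 - x 3 * y 6 - x 4 * y 0 + x 4 * y 1 + x 4 * y 2 + x 4 * y 3 + 3 * x 4 * y 4 + x 4 * y 5 + x 4 * y 6 + x 5 * y 0 + x 5 * y 1 - x 5 * y 2 + x 5 * y 3 + x 5 * y 4 + 3 * x 5 * y 5 - x 5 * y 6 - x 6 * y 0 + x 6 * y 1 + x 6 * y 2 - x 6 * y 3 + x 6 * y 4 - x 6 * y 5 + 3 * x 6 * y 6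

def amul (x : Fin 7 → ℚ) : Fin 7 → ℚ
  | ⟨0, _⟩ => -x 0
  | ⟨1, _⟩ => -x 1
  | ⟨2, _⟩ => x 1 + x 5
  | ⟨3, _⟩ => -x 0 + x 6
  | ⟨4, _⟩ => x 4
  | ⟨5, _⟩ => x 1 + x 2
  | ⟨6, _⟩ => -x 0 + x 3

def bmul (x : Fin 7 → ℚ) : Fin 7 → ℚ
  | ⟨0, _⟩ => -x 1 - x 5
  | ⟨1, _⟩ => x 1 + x 2
  | ⟨2, _⟩ => -x 1
  | ⟨3, _⟩ => x 0
  | ⟨4, _⟩ => -x 6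
  | ⟨5, _⟩ => -x 3 + x 6
  | ⟨6, _⟩ => x 4 + x 6

lemma amul_eq (x : Fin 7 → ℚ) : Amat *ᵥ x = amul x := by
  funext i
  fin_cases i <;>
    simp [Amat, amul, Matrix.mulVec, dotProduct, Fin.sum_univ_seven] <;> ring

lemma bmul_eq (x : Fin 7 → ℚ) : Bmat *ᵥ x = bmul x := by
  funext i
  fin_cases i <;>
    simp [Bmat, bmul, Matrix.mulVec, dotProduct, Fin.sum_univ_seven] <;> ring

lemma cprod_add_right (u y z : Fin 7 → ℚ) : cprod u (y + z) = cprod u y + cprod u z := by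
  funext i
  fin_cases i <;>
    · simp only [cprod, Pi.add_apply, Pi.smul_apply, Pi.neg_apply, Pi.sub_apply, Pi.zero_apply, smul_eq_mul, fin7_mk_0, fin7_mk_1, fin7_mk_2, fin7_mk_3, fin7_mk_4, fin7_mk_5, fin7_mk_6]
      ring

lemma cprod_smul_right (u : Fin 7 → ℚ) (c : ℚ) (y : Fin 7 → ℚ) :
    cprod u (c • y) = c • cprod u y := by
  funext i
  fin_cases i <;>
    · simp only [cprod, Pi.add_apply, Pi.smul_apply, Pi.neg_apply, Pi.sub_apply, Pi.zero_apply, smul_eq_mul, fin7_mk_0, fin7_mk_1, fin7_mk_2, fin7_mk_3, fin7_mk_4, fin7_mk_5, fin7_mk_6]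
      ring

lemma cprod_neg_left (x y : Fin 7 → ℚ) : cprod (-x) y = -cprod x y := by
  funext i
  fin_cases i <;>
    · simp only [cprod, Pi.add_apply, Pi.smul_apply, Pi.neg_apply, Pi.sub_apply, Pi.zero_apply, smul_eq_mul, fin7_mk_0, fin7_mk_1, fin7_mk_2, fin7_mk_3, fin7_mk_4, fin7_mk_5, fin7_mk_6]
      ring

lemma cprod_neg_right (x y : Fin 7 → ℚ) : cprod x (-y) = -cprod x y := by
  funext i
  fin_cases i <;>
    · simp only [cprod, Pi.add_apply, Pi.smul_apply, Pi.neg_apply, Pi.sub_apply, Pi.zero_apply, smul_eq_mul, fin7_mk_0, fin7_mk_1, fin7_mk_2, fin7_mk_3, fin7_mk_4, fin7_mk_5, fin7_mk_6]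
      ring

lemma cprod_zero_right (x : Fin 7 → ℚ) : cprod x (0 : Fin 7 → ℚ) = 0 := by
  funext i
  fin_cases i <;>
    · simp only [cprod, Pi.add_apply, Pi.smul_apply, Pi.neg_apply, Pi.sub_apply, Pi.zero_apply, smul_eq_mul, fin7_mk_0, fin7_mk_1, fin7_mk_2, fin7_mk_3, fin7_mk_4, fin7_mk_5, fin7_mk_6]
      ring

/-- The fundamental composition identity of the cross product. -/
lemma cprod_cprod (x y : Fin 7 → ℚ) :
    cprod x (cprod x y) = bForm x y • x - bForm x x • y := by
  funext i
  fin_cases i <;>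
    · simp only [cprod, bForm, Pi.smul_apply, Pi.sub_apply, smul_eq_mul, fin7_mk_0, fin7_mk_1, fin7_mk_2, fin7_mk_3, fin7_mk_4, fin7_mk_5, fin7_mk_6]
      ring

lemma bForm_anisotropic {x : Fin 7 → ℚ} (h : bForm x x = 0) : x = 0 := by
  have hs : (3/1 : ℚ) * (x 0 + (1/3 : ℚ) * x 1 - (1/3 : ℚ) * x 2 - (1/3 : ℚ) * x 3 - (1/3 : ℚ) * x 4 + (1/3 : ℚ) * x 5 - (1/3 : ℚ) * x 6) ^ 2 + (8/3 : ℚ) * (x 1 + (1/2 : ℚ) * x 2 - (1/4 : ℚ) * x 3 + (1/2 : ℚ) * x 4 + (1/4 : ℚ) * x 5 + (1/2 : ℚ) * x 6) ^ 2 + (2/1 : ℚ) * (x 2 - (1/2 : ℚ) * x 3 - (1/2 : ℚ) * x 5) ^ 2 + (2/1 : ℚ) * (x 3 + (1/2 : ℚ) * x 4 + (1/2 : ℚ) * x 5 - (1/2 : ℚ) * x 6) ^ 2 + (3/2 : ℚ) * (x 4 + (1/3 : ℚ) * x 5 + (1/3 : ℚ) * x 6) ^ 2 + (4/3 : ℚ)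 * (x 5 - (1/2 : ℚ) * x 6) ^ 2 + (1/1 : ℚ) * (x 6) ^ 2 = 0 := by
    simp only [bForm] at h
    linear_combination h
  have q0 : (x 0 + (1/3 : ℚ) * x 1 - (1/3 : ℚ) * x 2 - (1/3 : ℚ) * x 3 - (1/3 : ℚ) * x 4 + (1/3 : ℚ) * x 5 - (1/3 : ℚ) * x 6) = 0 := by
    have hq : (x 0 + (1/3 : ℚ) * x 1 - (1/3 : ℚ) * x 2 - (1/3 : ℚ) * x 3 - (1/3 : ℚ) * x 4 + (1/3 : ℚ) * x 5 - (1/3 : ℚ) * x 6) ^ 2 = 0 := le_antisymm (by linarith [sq_nonneg (x 1 + (1/2 : ℚ) * x 2 - (1/4 : ℚ) * x 3 + (1/2 : ℚ) * x 4 + (1/4 : ℚ) * x 5 + (1/2 : ℚ) * x 6), sq_nonneg (x 2 - (1/2 : ℚ) * x 3 - (1/2 : ℚ) * x 5), sq_nonneg (x 3 + (1/2 : ℚ) * x 4 + (1/2 : ℚ) * x 5 - (1/2 : ℚ) * x 6), sq_nonneg (x 4 + (1/3 : ℚ) * x 5 + (1/3 : ℚ) * x 6), sq_nonneg (x 5 -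 (1/2 : ℚ) * x 6), sq_nonneg (x 6)]) (sq_nonneg _)
    exact sq_eq_zero_iff.mp hq
  have q1 : (x 1 + (1/2 : ℚ) * x 2 - (1/4 : ℚ) * x 3 + (1/2 : ℚ) * x 4 + (1/4 : ℚ) * x 5 + (1/2 : ℚ) * x 6) = 0 := by
    have hq : (x 1 + (1/2 : ℚ) * x 2 - (1/4 : ℚ) * x 3 + (1/2 : ℚ) * x 4 + (1/4 : ℚ) * x 5 + (1/2 : ℚ) * x 6) ^ 2 = 0 := le_antisymm (by linarith [sq_nonneg (x 0 + (1/3 : ℚ) * x 1 - (1/3 : ℚ) * x 2 - (1/3 : ℚ) * x 3 - (1/3 : ℚ) * x 4 + (1/3 : ℚ) * x 5 - (1/3 : ℚ) * x 6), sq_nonneg (x 2 - (1/2 : ℚ) * x 3 - (1/2 : ℚ) * x 5), sq_nonneg (x 3 + (1/2 : ℚ) * x 4 + (1/2 : ℚ) * x 5 - (1/2 : ℚ) * x 6), sq_nonneg (x 4 + (1/3 : ℚ) * x 5 + (1/3 : ℚ) * x 6), sq_nonneg (x 5 - (1/2 : ℚ) * x 6), sq_nonneg (x 6)]) (sq_nonneg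 _)
    exact sq_eq_zero_iff.mp hq
  have q2 : (x 2 - (1/2 : ℚ) * x 3 - (1/2 : ℚ) * x 5) = 0 := by
    have hq : (x 2 - (1/2 : ℚ) * x 3 - (1/2 : ℚ) * x 5) ^ 2 = 0 := le_antisymm (by linarith [sq_nonneg (x 0 + (1/3 : ℚ) * x 1 - (1/3 : ℚ) * x 2 - (1/3 : ℚ) * x 3 - (1/3 : ℚ) * x 4 + (1/3 : ℚ) * x 5 - (1/3 : ℚ) * x 6), sq_nonneg (x 1 + (1/2 : ℚ) * x 2 - (1/4 : ℚ) * x 3 + (1/2 : ℚ) * x 4 + (1/4 : ℚ) * x 5 + (1/2 : ℚ) * x 6), sq_nonneg (x 3 + (1/2 : ℚ) * x 4 + (1/2 : ℚ) * x 5 - (1/2 : ℚ) * x 6), sq_nonneg (x 4 + (1/3 : ℚ) * x 5 + (1/3 : ℚ) * x 6), sq_nonneg (x 5 - (1/2 : ℚ) * x 6), sq_nonneg (x 6)]) (sq_nonneg _)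
    exact sq_eq_zero_iff.mp hq
  have q3 : (x 3 + (1/2 : ℚ) * x 4 + (1/2 : ℚ) * x 5 - (1/2 : ℚ) * x 6) = 0 := by
    have hq : (x 3 + (1/2 : ℚ) * x 4 + (1/2 : ℚ) * x 5 - (1/2 : ℚ) * x 6) ^ 2 = 0 := le_antisymm (by linarith [sq_nonneg (x 0 + (1/3 : ℚ) * x 1 - (1/3 : ℚ) * x 2 - (1/3 : ℚ) * x 3 - (1/3 : ℚ) * x 4 + (1/3 : ℚ) * x 5 - (1/3 : ℚ) * x 6), sq_nonneg (x 1 + (1/2 : ℚ) * x 2 - (1/4 : ℚ) * x 3 + (1/2 : ℚ) * x 4 + (1/4 : ℚ) * x 5 + (1/2 : ℚ) * x 6), sq_nonneg (x 2 - (1/2 : ℚ) * x 3 - (1/2 : ℚ) * x 5), sq_nonneg (x 4 + (1/3 : ℚ) * x 5 + (1/3 : ℚ) * x 6), sq_nonneg (x 5 - (1/2 : ℚ) * x 6), sq_nonneg (x 6)]) (sq_nonneg _)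
    exact sq_eq_zero_iff.mp hq
  have q4 : (x 4 + (1/3 : ℚ) * x 5 + (1/3 : ℚ) * x 6) = 0 := by
    have hq : (x 4 + (1/3 : ℚ) * x 5 + (1/3 : ℚ) * x 6) ^ 2 = 0 := le_antisymm (by linarith [sq_nonneg (x 0 + (1/3 : ℚ) * x 1 - (1/3 : ℚ) * x 2 - (1/3 : ℚ) * x 3 - (1/3 : ℚ) * x 4 + (1/3 : ℚ) * x 5 - (1/3 : ℚ) * x 6), sq_nonneg (x 1 + (1/2 : ℚ) * x 2 - (1/4 : ℚ) * x 3 + (1/2 : ℚ) * x 4 + (1/4 : ℚ) * x 5 + (1/2 : ℚ) * x 6), sq_nonneg (x 2 - (1/2 : ℚ) * x 3 - (1/2 : ℚ) * x 5), sq_nonneg (x 3 + (1/2 : ℚ) * x 4 + (1/2 : ℚ) * x 5 - (1/2 : ℚ) * x 6), sq_nonneg (x 5 - (1/2 : ℚ) * x 6), sq_nonneg (x 6)]) (sq_nonneg _)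
    exact sq_eq_zero_iff.mp hq
  have q5 : (x 5 - (1/2 : ℚ) * x 6) = 0 := by
    have hq : (x 5 - (1/2 : ℚ) * x 6) ^ 2 = 0 := le_antisymm (by linarith [sq_nonneg (x 0 + (1/3 : ℚ) * x 1 - (1/3 : ℚ) * x 2 - (1/3 : ℚ) * x 3 - (1/3 : ℚ) * x 4 + (1/3 : ℚ) * x 5 - (1/3 : ℚ) * x 6), sq_nonneg (x 1 + (1/2 : ℚ) * x 2 - (1/4 : ℚ) * x 3 + (1/2 : ℚ) * x 4 + (1/4 : ℚ) * x 5 + (1/2 : ℚ) * x 6), sq_nonneg (x 2 - (1/2 : ℚ) * x 3 - (1/2 : ℚ) * x 5), sq_nonneg (x 3 + (1/2 : ℚ) * x 4 + (1/2 : ℚ) * x 5 - (1/2 : ℚ) * x 6), sq_nonneg (x 4 + (1/3 : ℚ) * x 5 + (1/3 : ℚ) * x 6), sq_nonneg (x 6)]) (sq_nonneg _)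
    exact sq_eq_zero_iff.mp hq
  have q6 : (x 6) = 0 := by
    have hq : (x 6) ^ 2 = 0 := le_antisymm (by linarith [sq_nonneg (x 0 + (1/3 : ℚ) * x 1 - (1/3 : ℚ) * x 2 - (1/3 : ℚ) * x 3 - (1/3 : ℚ) * x 4 + (1/3 : ℚ) * x 5 - (1/3 : ℚ) * x 6), sq_nonneg (x 1 + (1/2 : ℚ) * x 2 - (1/4 : ℚ) * x 3 + (1/2 : ℚ) * x 4 + (1/4 : ℚ) * x 5 + (1/2 : ℚ) * x 6), sq_nonneg (x 2 - (1/2 : ℚ) * x 3 - (1/2 : ℚ) * x 5), sq_nonneg (x 3 + (1/2 : ℚ) * x 4 + (1/2 : ℚ) * x 5 - (1/2 : ℚ) * x 6), sq_nonneg (x 4 + (1/3 : ℚ) * x 5 + (1/3 : ℚ) * x 6), sq_nonneg (x 5 - (1/2 : ℚ) * x 6)]) (sq_nonneg _)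
    exact sq_eq_zero_iff.mp hq
  have h6 : x 6 = 0 := by linarith
  have h5 : x 5 = 0 := by linarith
  have h4 : x 4 = 0 := by linarith
  have h3 : x 3 = 0 := by linarith
  have h2 : x 2 = 0 := by linarith
  have h1 : x 1 = 0 := by linarith
  have h0 : x 0 = 0 := by linarith
  funext i
  fin_cases i <;> simp only [Pi.zero_apply, fin7_mk_0, fin7_mk_1, fin7_mk_2, fin7_mk_3,
    fin7_mk_4, fin7_mk_5, fin7_mk_6] <;> assumption

lemma cprod_equivariant_A (x y : Fin 7 → ℚ) :
    cprod (Amat *ᵥ x) (Amat *ᵥ y) = Amat *ᵥ cprod x y := by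
  rw [amul_eq, amul_eq, amul_eq]
  funext i
  fin_cases i <;>
    · simp only [cprod, amul, fin7_mk_0, fin7_mk_1, fin7_mk_2, fin7_mk_3, fin7_mk_4, fin7_mk_5, fin7_mk_6]
      ring

lemma cprod_equivariant_B (x y : Fin 7 → ℚ) :
    cprod (Bmat *ᵥ x) (Bmat *ᵥ y) = Bmat *ᵥ cprod x y := by
  rw [bmul_eq, bmul_eq, bmul_eq]
  funext i
  fin_cases i <;>
    · simp only [cprod, bmul, fin7_mk_0, fin7_mk_1, fin7_mk_2, fin7_mk_3, fin7_mk_4, fin7_mk_5, fin7_mk_6]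
      ring

/-- `cprod u ·` as a linear map. -/
def cprodR (u : Fin 7 → ℚ) : (Fin 7 → ℚ) →ₗ[ℚ] (Fin 7 → ℚ) where
  toFun := cprod u
  map_add' := cprod_add_right u
  map_smul' c y := cprod_smul_right u c y

/-- The subgroup of GL₇(ℚ) preserving the cross product. -/
def crossStab : Subgroup (GL (Fin 7) ℚ) where
  carrier := {g | ∀ x y, cprod ((g : Matrix (Fin 7) (Fin 7) ℚ) *ᵥ x)
    ((g : Matrix (Fin 7) (Fin 7) ℚ) *ᵥ y) = (g : Matrix (Fin 7) (Fin 7) ℚ) *ᵥ cprod x y}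
  one_mem' := by
    intro x y
    simp [Units.val_one, Matrix.one_mulVec]
  mul_mem' := by
    intro a b ha hb x y
    simp only [Units.val_mul, ← Matrix.mulVec_mulVec]
    rw [ha, hb]
  inv_mem' := by
    intro g hg x y
    have h1 : ∀ v : Fin 7 → ℚ,
        (g : Matrix (Fin 7) (Fin 7) ℚ) *ᵥ ((↑g⁻¹ : Matrix (Fin 7) (Fin 7) ℚ) *ᵥ v) = v := by
      intro v
      rw [Matrix.mulVec_mulVec]
      have hu : (g : Matrix (Fin 7) (Fin 7) ℚ) * (↑g⁻¹ : Matrix (Fin 7) (Fin 7) ℚ) = 1 := by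
        rw [← Units.val_mul, mul_inv_cancel, Units.val_one]
      rw [hu, Matrix.one_mulVec]
    have h2 : ∀ v : Fin 7 → ℚ,
        (↑g⁻¹ : Matrix (Fin 7) (Fin 7) ℚ) *ᵥ ((g : Matrix (Fin 7) (Fin 7) ℚ) *ᵥ v) = v := by
      intro v
      rw [Matrix.mulVec_mulVec]
      have hu : (↑g⁻¹ : Matrix (Fin 7) (Fin 7) ℚ) * (g : Matrix (Fin 7) (Fin 7) ℚ) = 1 := by
        rw [← Units.val_mul, inv_mul_cancel, Units.val_one]
      rw [hu, Matrix.one_mulVec]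
    have h3 := hg ((↑g⁻¹ : Matrix (Fin 7) (Fin 7) ℚ) *ᵥ x) ((↑g⁻¹ : Matrix (Fin 7) (Fin 7) ℚ) *ᵥ y)
    rw [h1, h1] at h3
    calc cprod ((↑g⁻¹ : Matrix (Fin 7) (Fin 7) ℚ) *ᵥ x) ((↑g⁻¹ : Matrix (Fin 7) (Fin 7) ℚ) *ᵥ y)
        = (↑g⁻¹ : Matrix (Fin 7) (Fin 7) ℚ) *ᵥ ((g : Matrix (Fin 7) (Fin 7) ℚ) *ᵥ
            cprod ((↑g⁻¹ : Matrix (Fin 7) (Fin 7) ℚ) *ᵥ x)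
            ((↑g⁻¹ : Matrix (Fin 7) (Fin 7) ℚ) *ᵥ y)) := (h2 _).symm
      _ = (↑g⁻¹ : Matrix (Fin 7) (Fin 7) ℚ) *ᵥ cprod x y := by rw [← h3]
open Module in
/-- Any non-identity involution preserving the cross product has trace `-1`. -/
theorem trace_key (M : Matrix (Fin 7) (Fin 7) ℚ) (h2 : M * M = 1) (hne : M ≠ 1)
    (hcr : ∀ x y, cprod (M *ᵥ x) (M *ᵥ y) = M *ᵥ cprod x y) :
    Matrix.trace M = -1 := by
  set f : (Fin 7 → ℚ) →ₗ[ℚ] (Fin 7 → ℚ) := Matrix.mulVecLin M with hf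
  have hfv : ∀ v, f v = M *ᵥ v := fun v => Matrix.mulVecLin_apply M v
  have hff : ∀ v, f (f v) = v := by
    intro v
    rw [hfv, hfv, Matrix.mulVec_mulVec, h2, Matrix.one_mulVec]
  set Vp := LinearMap.ker (f - LinearMap.id) with hVp
  set Vm := LinearMap.ker (f + LinearMap.id) with hVm
  have memVp : ∀ v, v ∈ Vp ↔ f v = v := by
    intro v
    rw [hVp, LinearMap.mem_ker, LinearMap.sub_apply, LinearMap.id_apply, sub_eq_zero]
  have memVm : ∀ v, v ∈ Vm ↔ f v = -v := by
    intro v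
    rw [hVm, LinearMap.mem_ker, LinearMap.add_apply, LinearMap.id_apply,
      add_eq_zero_iff_eq_neg]
  have hdisj : Vp ⊓ Vm = ⊥ := by
    apply (Submodule.eq_bot_iff _).mpr
    intro v hv
    obtain ⟨hp, hm⟩ := Submodule.mem_inf.mp hv
    have e1 := (memVp v).1 hp
    have e2 := (memVm v).1 hm
    have e3 : v = -v := e1.symm.trans e2
    funext i
    have h := congrFun e3 i
    simp only [Pi.neg_apply] at h
    have : v i = 0 := by linarith
    simpa using this
  have hsup : Vp ⊔ Vm = ⊤ := by
    rw [eq_top_iff]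
    intro v _
    have hv : v = (2⁻¹ : ℚ) • (v + f v) + (2⁻¹ : ℚ) • (v - f v) := by
      funext i
      simp only [Pi.add_apply, Pi.smul_apply, Pi.sub_apply, smul_eq_mul]
      ring
    rw [hv]
    exact Submodule.add_mem_sup
      (Submodule.smul_mem _ _ ((memVp _).2 (by rw [_root_.map_add, hff]; exact add_comm _ _)))
      (Submodule.smul_mem _ _ ((memVm _).2 (by rw [_root_.map_sub, hff]; abel)))
  have hfin : finrank ℚ Vp + finrank ℚ Vm = 7 := by
    have h := Submodule.finrank_sup_add_finrank_inf_eq Vp Vm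
    rw [hdisj, hsup, finrank_top, finrank_bot, Module.finrank_pi] at h
    simpa using h.symm
  -- trace of f equals finrank Vp - finrank Vm
  have hproj1 : LinearMap.IsProj Vp ((2⁻¹ : ℚ) • (LinearMap.id + f)) := by
    constructor
    · intro v
      rw [memVp]
      simp only [LinearMap.smul_apply, LinearMap.add_apply, LinearMap.id_apply, _root_.map_smul,
        _root_.map_add, hff v]
      rw [add_comm (f v) v]
    · intro v hv
      have e := (memVp v).1 hv
      simp only [LinearMap.smul_apply, LinearMap.add_apply, LinearMap.id_apply, e]
      funext i
      simp only [Pi.smul_apply, Pi.add_apply, smul_eq_mul]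
      ring
  have hproj2 : LinearMap.IsProj Vm ((2⁻¹ : ℚ) • (LinearMap.id - f)) := by
    constructor
    · intro v
      rw [memVm]
      simp only [LinearMap.smul_apply, LinearMap.sub_apply, LinearMap.id_apply, _root_.map_smul,
        _root_.map_sub, hff v]
      funext i
      simp only [Pi.smul_apply, Pi.sub_apply, Pi.neg_apply, smul_eq_mul]
      ring
    · intro v hv
      have e := (memVm v).1 hv
      simp only [LinearMap.smul_apply, LinearMap.sub_apply, LinearMap.id_apply, e]
      funext i
      simp only [Pi.smul_apply, Pi.sub_apply, Pi.neg_apply, smul_eq_mul]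
      ring
  have htr1 := hproj1.trace
  have htr2 := hproj2.trace
  have hfeq : f = (2⁻¹ : ℚ) • (LinearMap.id + f) - (2⁻¹ : ℚ) • (LinearMap.id - f) := by
    refine LinearMap.ext fun v => ?_
    simp only [LinearMap.sub_apply, LinearMap.smul_apply, LinearMap.add_apply,
      LinearMap.id_apply]
    funext i
    simp only [Pi.sub_apply, Pi.smul_apply, Pi.add_apply, smul_eq_mul]
    ring
  have htr : LinearMap.trace ℚ (Fin 7 → ℚ) f =
      (finrank ℚ Vp : ℚ) - (finrank ℚ Vm : ℚ) := by
    rw [hfeq, map_sub, htr1, htr2]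
  have htrM : LinearMap.trace ℚ (Fin 7 → ℚ) f = Matrix.trace M := by
    rw [LinearMap.trace_eq_matrix_trace ℚ (Pi.basisFun ℚ (Fin 7)) f,
      LinearMap.toMatrix_eq_toMatrix']
    congr 1
    rw [hf, ← Matrix.toLin'_apply']
    exact LinearMap.toMatrix'_toLin' M
  -- Vm is nontrivial
  have hVmne : Vm ≠ ⊥ := by
    intro hb
    apply hne
    have hVpTop : Vp = ⊤ := by
      rw [hb, sup_bot_eq] at hsup
      exact hsup
    have hid : ∀ v, M *ᵥ v = v := by
      intro v
      rw [← hfv]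
      exact (memVp v).1 (hVpTop ▸ Submodule.mem_top)
    ext i j
    have h := congrFun (hid (Pi.single j 1)) i
    rw [Matrix.mulVec_single] at h
    simp only [Pi.smul_apply, Matrix.col_apply, MulOpposite.op_one, one_smul] at h
    rw [h]
    simp [Matrix.one_apply, Pi.single_apply, eq_comm]
  obtain ⟨x₀, hx₀m, hx₀⟩ := Submodule.exists_mem_ne_zero_of_ne_bot hVmne
  have hx0f : M *ᵥ x₀ = -x₀ := by rw [← hfv]; exact (memVm x₀).1 hx₀m
  -- kernel of cprod x₀
  have hq : bForm x₀ x₀ ≠ 0 := fun hq0 => hx₀ (bForm_anisotropic hq0)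
  have hker : ∀ y, cprod x₀ y = 0 → ∃ c : ℚ, y = c • x₀ := by
    intro y h0
    have hid0 := cprod_cprod x₀ y
    rw [h0, cprod_zero_right] at hid0
    refine ⟨bForm x₀ y / bForm x₀ x₀, ?_⟩
    funext i
    have h := congrFun hid0 i
    simp only [Pi.zero_apply, Pi.sub_apply, Pi.smul_apply, smul_eq_mul] at h
    simp only [Pi.smul_apply, smul_eq_mul]
    rw [div_mul_eq_mul_div, eq_div_iff hq]
    linear_combination h
  -- cprod x₀ maps Vp to Vm and Vm to Vp
  have hmapPM : ∀ y ∈ Vp, cprodR x₀ y ∈ Vm := by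
    intro y hy
    rw [memVm]
    have h := hcr x₀ y
    rw [hx0f, (show M *ᵥ y = y by rw [← hfv]; exact (memVp y).1 hy), cprod_neg_left] at h
    show f (cprod x₀ y) = -cprod x₀ y
    rw [hfv, ← h]
  have hmapMP : ∀ y ∈ Vm, cprodR x₀ y ∈ Vp := by
    intro y hy
    rw [memVp]
    have h := hcr x₀ y
    rw [hx0f, (show M *ᵥ y = -y by rw [← hfv]; exact (memVm y).1 hy), cprod_neg_left,
      cprod_neg_right, neg_neg] at h
    show f (cprod x₀ y) = cprod x₀ y
    rw [hfv, ← h]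
  -- injective map Vp → Vm
  have hx₀Vm : (⟨x₀, hx₀m⟩ : Vm) ≠ 0 := fun h => hx₀ (by simpa [Subtype.ext_iff] using h)
  have hle1 : finrank ℚ Vp ≤ finrank ℚ Vm := by
    have hinj : Function.Injective ((cprodR x₀).restrict hmapPM) := by
      rw [← LinearMap.ker_eq_bot]
      apply (Submodule.eq_bot_iff _).mpr
      rintro ⟨y, hy⟩ hk
      have h0 : cprod x₀ y = 0 := by
        have := congrArg Subtype.val hk
        simpa [LinearMap.restrict_apply, cprodR] using this
      obtain ⟨cc, hcy⟩ := hker y h0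
      by_cases hc : cc = 0
      · apply Subtype.ext
        simp [hcy, hc]
      · exfalso
        have hx0Vp : x₀ ∈ Vp := by
          have hsm := Vp.smul_mem cc⁻¹ hy
          rw [hcy, smul_smul, inv_mul_cancel₀ hc, one_smul] at hsm
          exact hsm
        have : x₀ ∈ Vp ⊓ Vm := Submodule.mem_inf.mpr ⟨hx0Vp, hx₀m⟩
        rw [hdisj] at this
        exact hx₀ (by simpa using this)
    exact LinearMap.finrank_le_finrank_of_injective hinj
  -- Vm → Vp has kernel of dimension ≤ 1
  have hle2 : finrank ℚ Vm ≤ finrank ℚ Vp + 1 := by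
    set L2 := (cprodR x₀).restrict hmapMP with hL2
    have hkle : LinearMap.ker L2 ≤ Submodule.span ℚ {(⟨x₀, hx₀m⟩ : Vm)} := by
      rintro ⟨y, hy⟩ hk
      have h0 : cprod x₀ y = 0 := by
        have := congrArg Subtype.val (LinearMap.mem_ker.mp hk)
        simpa [hL2, LinearMap.restrict_apply, cprodR] using this
      obtain ⟨cc, hcy⟩ := hker y h0
      exact Submodule.mem_span_singleton.mpr ⟨cc, Subtype.ext (by simp [hcy])⟩
    have hk1 : finrank ℚ (LinearMap.ker L2) ≤ 1 := by
      have := Submodule.finrank_mono hkle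
      rwa [finrank_span_singleton hx₀Vm] at this
    have hr : finrank ℚ (LinearMap.range L2) ≤ finrank ℚ Vp :=
      (LinearMap.range L2).finrank_le
    have hrn := LinearMap.finrank_range_add_finrank_ker L2
    omega
  have ha : finrank ℚ Vp = 3 ∧ finrank ℚ Vm = 4 := by omega
  rw [← htrM, htr, ha.1, ha.2]
  norm_num
/-- Every element of order 2 in the subgroup of GL₇(ℚ) generated by A and B has
trace −1. -/
theorem trace_of_involution_eq_neg_one :
    ∀ g ∈ (Subgroup.closure {AU, BU} : Subgroup (GL (Fin 7) ℚ)),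
      orderOf g = 2 → Matrix.trace (g : Matrix (Fin 7) (Fin 7) ℚ) = -1 := by
  intro g hg hord
  have hstab : g ∈ crossStab := by
    refine (Subgroup.closure_le crossStab).mpr ?_ hg
    intro u hu
    simp only [Set.mem_insert_iff, Set.mem_singleton_iff] at hu
    rcases hu with rfl | rfl
    · exact fun x y => cprod_equivariant_A x y
    · exact fun x y => cprod_equivariant_B x y
  have hcr : ∀ x y, cprod ((g : Matrix (Fin 7) (Fin 7) ℚ) *ᵥ x)
      ((g : Matrix (Fin 7) (Fin 7) ℚ) *ᵥ y) = (g : Matrix (Fin 7) (Fin 7) ℚ) *ᵥ cprod x y :=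
    hstab
  have hg2 : g * g = 1 := by
    have hp := pow_orderOf_eq_one g
    rw [hord, pow_two] at hp
    exact hp
  have h2 : (g : Matrix (Fin 7) (Fin 7) ℚ) * (g : Matrix (Fin 7) (Fin 7) ℚ) = 1 := by
    calc (g : Matrix (Fin 7) (Fin 7) ℚ) * (g : Matrix (Fin 7) (Fin 7) ℚ)
        = ((g * g : GL (Fin 7) ℚ) : Matrix (Fin 7) (Fin 7) ℚ) := (Units.val_mul g g).symm
      _ = ((1 : GL (Fin 7) ℚ) : Matrix (Fin 7) (Fin 7) ℚ) := by rw [hg2]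
      _ = 1 := Units.val_one
  have hne : (g : Matrix (Fin 7) (Fin 7) ℚ) ≠ 1 := by
    intro h1
    have hg1 : g = 1 := by
      apply Units.ext
      rw [h1, Units.val_one]
    rw [hg1, orderOf_one] at hord
    omega
  exact trace_key _ h2 hne hcr
end
end
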